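/- Let w_b be the solution on [0,b] of r w = (μ - α((1-x)^+))w' + (σ²/2)w'' with terminal conditions w'(b) = 1 and w''(b) = 0, where b > 1. If w_b(0) = 0, then w_b' > 0 on (0,b), i.e., w_b is strictly increasing on [0,b]. -/

import Mathlib

open Set

private lemma aux_mono_near {g : ℝ → ℝ} (hgd : Differentiable ℝ g) (hgc : Continuous (deriv g))
    {d : ℝ} (hpos : 0 < deriv g d) :
    ∃ δ > 0, StrictMonoOn g (Icc (d - δ) (d + δ)) := by
  have hop : IsOpen (deriv g ⁻¹' Ioi 0) := isOpen_Ioi.preimage hgc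
  obtain ⟨δ, hδ, hball⟩ := Metric.isOpen_iff.mp hop d hpos
  refine ⟨δ/2, by linarith, ?_⟩
  have hsub : Icc (d - δ/2) (d + δ/2) ⊆ Metric.ball d δ := by
    intro y hy
    rw [Metric.mem_ball, Real.dist_eq, abs_sub_lt_iff]
    constructor <;> [linarith [hy.2]; linarith [hy.1]]
  exact strictMonoOn_of_deriv_pos (convex_Icc _ _) (hgd.continuous.continuousOn)
    (fun x hx => hball (hsub (interior_subset hx)))

private lemma aux_anti_near {g : ℝ → ℝ} (hgd : Differentiable ℝ g) (hgc : Continuous (deriv g))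
    {d : ℝ} (hneg : deriv g d < 0) :
    ∃ δ > 0, StrictAntiOn g (Icc (d - δ) (d + δ)) := by
  have hop : IsOpen (deriv g ⁻¹' Iio 0) := isOpen_Iio.preimage hgc
  obtain ⟨δ, hδ, hball⟩ := Metric.isOpen_iff.mp hop d hneg
  refine ⟨δ/2, by linarith, ?_⟩
  have hsub : Icc (d - δ/2) (d + δ/2) ⊆ Metric.ball d δ := by
    intro y hy
    rw [Metric.mem_ball, Real.dist_eq, abs_sub_lt_iff]
    constructor <;> [linarith [hy.2]; linarith [hy.1]]
  exact strictAntiOn_of_deriv_neg (convex_Icc _ _) (hgd.continuous.continuousOn)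
    (fun x hx => hball (hsub (interior_subset hx)))

private lemma aux_gronwall_ineq (σ r M f a p q : ℝ) (hσ : 0 < σ) (hr : 0 < r) (hM : 0 ≤ M)
    (hf1 : -M ≤ f) (hf2 : f ≤ M) (hq : r * a = f * p + σ^2/2 * q) :
    2*a*p + 2*p*q ≤ (1 + 2*r/σ^2 + 4*M/σ^2) * (a^2 + p^2) := by
  have hσ2 : 0 < σ^2 := by positivity
  have hq' : q = (r*a - f*p) * 2 / σ^2 := by field_simp; linarith
  subst hq'
  rw [← sub_nonneg]
  have key : (1 + 2*r/σ^2 + 4*M/σ^2) * (a^2+p^2) - (2*a*p + 2*p*((r*a - f*p)*2/σ^2))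
      = (σ^2*(a-p)^2 + 2*r*(a-p)^2 + (M + f)*4*p^2 + 4*M*a^2) / σ^2 := by
    field_simp; ring
  rw [key]
  apply div_nonneg _ hσ2.le
  have h1 : 0 ≤ M - f := by linarith
  have h2 : 0 ≤ M + f := by linarith
  positivity

theorem stmt_2 (μ σ r : ℝ) (hσ : 0 < σ) (hr : 0 < r) (hμr : r < μ)
    (α : ℝ → ℝ) (hα : ContDiff ℝ 1 α) (hαconv : ConvexOn ℝ (Ici 0) α)
    (hαmono : StrictMonoOn α (Ici 0)) (hα0 : α 0 = 0)
    (hα' : ∀ x ≥ (0:ℝ), r ≤ deriv α x)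
    (b : ℝ) (hb : 1 < b) (w : ℝ → ℝ) (hw : ContDiff ℝ 2 w)
    (hode : ∀ x ∈ Icc (0:ℝ) b,
      r * w x = (μ - α (max (1 - x) 0)) * deriv w x + σ ^ 2 / 2 * deriv (deriv w) x)
    (hw'b : deriv w b = 1) (hw''b : deriv (deriv w) b = 0) (hw0 : w 0 = 0) :
    (∀ x ∈ Ioo (0:ℝ) b, 0 < deriv w x) ∧ StrictMonoOn w (Icc 0 b) := by
  have hb0 : (0:ℝ) < b := by linarith
  have hσ2 : (0:ℝ) < σ^2 := by positivity
  -- basic regularity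
  have hcd1 : ContDiff ℝ ((1:WithTop ℕ∞)+1) w := by exact_mod_cast hw
  have hcdw' : ContDiff ℝ 1 (deriv w) := (contDiff_succ_iff_deriv.mp hcd1).2.2
  have hdw : Differentiable ℝ w := hw.differentiable (by norm_num)
  have hdw' : Differentiable ℝ (deriv w) := (contDiff_one_iff_deriv.mp hcdw').1
  have hcw' : Continuous (deriv w) := hdw'.continuous
  have hcw'' : Continuous (deriv (deriv w)) := (contDiff_one_iff_deriv.mp hcdw').2
  -- value at b
  have hwb : w b = μ / r := by
    have h := hode b ⟨hb0.le, le_rfl⟩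
    rw [max_eq_right (by linarith : 1 - b ≤ 0), hα0, hw'b, hw''b] at h
    rw [eq_div_iff hr.ne']
    linarith
  have hwbpos : 0 < w b := by rw [hwb]; exact div_pos (by linarith) hr
  -- second derivative formula
  have hdd : ∀ x ∈ Icc (0:ℝ) b,
      deriv (deriv w) x = (r * w x - (μ - α (max (1 - x) 0)) * deriv w x) * 2 / σ^2 := by
    intro x hx
    have h := hode x hx
    field_simp
    linarith
  -- monotonicity of α and bound on the drift
  have hα1 : 0 ≤ α 1 := by
    have := hαmono (le_refl (0:ℝ)) (mem_Ici.mpr zero_le_one) zero_lt_one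
    rw [hα0] at this; linarith
  have hαnn : ∀ x ∈ Icc (0:ℝ) b, 0 ≤ α (max (1 - x) 0) ∧ α (max (1 - x) 0) ≤ α 1 := by
    intro x hx
    have ht0 : (0:ℝ) ≤ max (1 - x) 0 := le_max_right _ _
    have ht1 : max (1 - x) 0 ≤ 1 := max_le (by linarith [hx.1]) zero_le_one
    have hmono := hαmono.monotoneOn
    constructor
    · have := hmono (le_refl (0:ℝ)) ht0 ht0
      rw [hα0] at this; exact this
    · exact hmono ht0 (mem_Ici.mpr zero_le_one) ht1
  -- Step B : w ≥ 0 on [0,b]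
  have hwnn : ∀ x ∈ Icc (0:ℝ) b, 0 ≤ w x := by
    by_contra hcon
    push_neg at hcon
    obtain ⟨z, hz, hzneg⟩ := hcon
    obtain ⟨m, hm, hmin⟩ := isCompact_Icc.exists_isMinOn (nonempty_Icc.mpr hb0.le)
      hw.continuous.continuousOn
    have hmin' := isMinOn_iff.mp hmin
    have hwm : w m < 0 := lt_of_le_of_lt (hmin' z hz) hzneg
    have hm0 : 0 < m := by
      rcases hm.1.lt_or_eq with h | h
      · exact h
      · exfalso; rw [← h, hw0] at hwm; exact lt_irrefl 0 hwm
    have hmb : m < b := by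
      rcases hm.2.lt_or_eq with h | h
      · exact h
      · exfalso; rw [h] at hwm; linarith
    have hm' : deriv w m = 0 :=
      (hmin.isLocalMin (Icc_mem_nhds hm0 hmb)).deriv_eq_zero
    have hm'' : deriv (deriv w) m < 0 := by
      rw [hdd m hm, hm']
      have : r * w m < 0 := mul_neg_of_pos_of_neg hr hwm
      have h2 : r * w m - (μ - α (max (1 - m) 0)) * 0 = r * w m := by ring
      rw [h2]
      exact div_neg_of_neg_of_pos (by linarith) hσ2
    obtain ⟨δ, hδ, hanti⟩ := aux_anti_near hdw' hcw'' hm''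
    set ε := min δ (b - m) / 2 with hεdef
    have hε0 : 0 < ε := by
      have : 0 < min δ (b - m) := lt_min hδ (by linarith)
      positivity
    have hεδ : ε ≤ δ / 2 := by
      have := min_le_left δ (b - m); simp only [hεdef]; linarith
    have hεb : ε ≤ (b - m) / 2 := by
      have := min_le_right δ (b - m); simp only [hεdef]; linarith
    -- w' < 0 on (m, m + ε]
    have hw'neg : ∀ x ∈ Ioc m (m + ε), deriv w x < 0 := by
      intro x hx
      have h1 : deriv w x < deriv w m := by
        apply hanti ⟨by linarith, by linarith [hx.2]⟩ ⟨by linarith [hx.1.le], by linarith [hx.2]⟩ hx.1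
      rw [hm'] at h1; exact h1
    have hwanti : StrictAntiOn w (Icc m (m + ε)) := by
      apply strictAntiOn_of_deriv_neg (convex_Icc _ _) hw.continuous.continuousOn
      intro x hx
      rw [interior_Icc] at hx
      exact hw'neg x ⟨hx.1, hx.2.le⟩
    have : w (m + ε) < w m := hwanti ⟨le_refl m, by linarith⟩ ⟨by linarith, le_refl _⟩ (by linarith)
    have : w m ≤ w (m + ε) := hmin' (m + ε) ⟨by linarith, by linarith⟩
    linarith
  -- Step C : w > 0 on (0,b)
  have hwpos : ∀ x ∈ Ioo (0:ℝ) b, 0 < w x := by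
    by_contra hcon
    push_neg at hcon
    obtain ⟨c, hc, hcle⟩ := hcon
    have hwc0 : w c = 0 := le_antisymm hcle (hwnn c ⟨hc.1.le, hc.2.le⟩)
    have hminc : IsMinOn w (Icc 0 b) c := by
      apply isMinOn_iff.mpr
      intro x hx; rw [hwc0]; exact hwnn x hx
    have hw'c : deriv w c = 0 :=
      (hminc.isLocalMin (Icc_mem_nhds hc.1 hc.2)).deriv_eq_zero
    -- Gronwall argument on [c, b]
    set M := |μ| + α 1 with hMdef
    have hM : 0 ≤ M := by have := abs_nonneg μ; simp only [hMdef]; linarith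
    set K := 1 + 2*r/σ^2 + 4*M/σ^2 with hKdef
    have hfb : ∀ x ∈ Icc (0:ℝ) b,
        -M ≤ μ - α (max (1 - x) 0) ∧ μ - α (max (1 - x) 0) ≤ M := by
      intro x hx
      obtain ⟨h1, h2⟩ := hαnn x hx
      constructor
      · simp only [hMdef]; have := neg_abs_le μ; linarith
      · simp only [hMdef]; have := le_abs_self μ; linarith
    have hE : ∀ x, HasDerivAt (fun y => (w y)^2 + (deriv w y)^2)
        (2 * w x * deriv w x + 2 * deriv w x * deriv (deriv w) x) x := by
      intro x
      have h1 := ((hdw x).hasDerivAt).fun_pow 2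
      have h2 := ((hdw' x).hasDerivAt).fun_pow 2
      exact (h1.fun_add h2).congr_deriv (by push_cast; ring)
    have hG : ∀ x, HasDerivAt (fun y => ((w y)^2 + (deriv w y)^2) * Real.exp (-(K * y)))
        ((2 * w x * deriv w x + 2 * deriv w x * deriv (deriv w) x) * Real.exp (-(K * x))
          + ((w x)^2 + (deriv w x)^2) * (Real.exp (-(K * x)) * (-K))) x := by
      intro x
      have h0 : HasDerivAt (fun y : ℝ => -(K * y)) (-K) x := by
        simpa using ((hasDerivAt_id x).const_mul K).fun_neg
      exact (hE x).mul h0.exp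
    have hGanti : AntitoneOn (fun y => ((w y)^2 + (deriv w y)^2) * Real.exp (-(K * y)))
        (Icc c b) := by
      apply antitoneOn_of_deriv_nonpos (convex_Icc _ _)
      · exact (((hw.continuous.pow 2).add (hcw'.pow 2)).mul (Real.continuous_exp.comp (continuous_const.mul continuous_id).neg)).continuousOn
      · exact fun x _ => (hG x).differentiableAt.differentiableWithinAt
      · intro x hx
        rw [interior_Icc] at hx
        rw [(hG x).deriv]
        have hxmem : x ∈ Icc (0:ℝ) b := ⟨by linarith [hx.1, hc.1], hx.2.le⟩
        obtain ⟨hf1, hf2⟩ := hfb x hxmem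
        have hineq := aux_gronwall_ineq σ r M (μ - α (max (1 - x) 0)) (w x) (deriv w x)
          (deriv (deriv w) x) hσ hr hM hf1 hf2 (hode x hxmem)
        have hexp := Real.exp_pos (-(K * x))
        rw [hKdef] at *
        nlinarith [mul_nonneg (sub_nonneg.mpr hineq) hexp.le]
    have h1 := hGanti (left_mem_Icc.mpr hc.2.le) (right_mem_Icc.mpr hc.2.le) hc.2.le
    simp only [hwc0, hw'c, hw'b] at h1
    norm_num at h1
    have h2 : 0 < ((w b)^2 + 1) * Real.exp (-(K * b)) := by positivity
    nlinarith [h1, h2]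
  -- zero-derivative points have positive second derivative
  have hzero : ∀ d ∈ Ioo (0:ℝ) b, deriv w d = 0 → 0 < deriv (deriv w) d := by
    intro d hd hd'
    rw [hdd d ⟨hd.1.le, hd.2.le⟩, hd']
    have h1 : r * w d - (μ - α (max (1 - d) 0)) * 0 = r * w d := by ring
    rw [h1]
    have := hwpos d hd
    positivity
  -- Step D : w' > 0 on (0,b)
  have hstep : ∀ x ∈ Ioo (0:ℝ) b, 0 < deriv w x := by
    by_contra hcon
    push_neg at hcon
    obtain ⟨x0, hx0, hx0'⟩ := hcon
    -- find x1 in (0,b) with w'(x1) < 0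
    have hx1ex : ∃ x1 ∈ Ioo (0:ℝ) b, deriv w x1 < 0 := by
      rcases hx0'.lt_or_eq with h | h
      · exact ⟨x0, hx0, h⟩
      · have h'' := hzero x0 hx0 h
        obtain ⟨δ, hδ, hmono⟩ := aux_mono_near hdw' hcw'' h''
        set ε := min δ x0 / 2 with hεdef
        have hε0 : 0 < ε := by
          have : 0 < min δ x0 := lt_min hδ hx0.1
          positivity
        have hεδ : ε ≤ δ / 2 := by
          have := min_le_left δ x0; simp only [hεdef]; linarith
        have hεx : ε ≤ x0 / 2 := by
          have := min_le_right δ x0; simp only [hεdef]; linarith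
        refine ⟨x0 - ε, ⟨by linarith [hx0.1], by linarith [hx0.2]⟩, ?_⟩
        have hlt : deriv w (x0 - ε) < deriv w x0 :=
          hmono ⟨by linarith, by linarith⟩ ⟨by linarith, by linarith⟩ (by linarith)
        rw [h] at hlt; exact hlt
    obtain ⟨x1, hx1, hx1'⟩ := hx1ex
    set T := Icc (0:ℝ) x1 ∩ deriv w ⁻¹' Ici 0 with hTdef
    have hTclosed : IsClosed T := isClosed_Icc.inter (isClosed_Ici.preimage hcw')
    have hTbdd : BddAbove T := ⟨x1, fun x hx => hx.1.2⟩
    rcases T.eq_empty_or_nonempty with hTe | hTne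
    · -- w' < 0 on all of [0, x1]
      have hneg : ∀ x ∈ Icc (0:ℝ) x1, deriv w x < 0 := by
        intro x hx
        by_contra hcc
        push_neg at hcc
        have hmem : x ∈ T := ⟨hx, by simpa using hcc⟩
        rw [hTe] at hmem
        exact absurd hmem (notMem_empty x)
      have hwanti : StrictAntiOn w (Icc 0 x1) := by
        apply strictAntiOn_of_deriv_neg (convex_Icc _ _) hw.continuous.continuousOn
        intro x hx
        rw [interior_Icc] at hx
        exact hneg x ⟨hx.1.le, hx.2.le⟩
      have h1 : w x1 < w 0 := hwanti (left_mem_Icc.mpr hx1.1.le) (right_mem_Icc.mpr hx1.1.le) hx1.1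
      rw [hw0] at h1
      exact absurd (hwnn x1 ⟨hx1.1.le, hx1.2.le⟩) (by linarith)
    · set d := sSup T with hddef
      have hdT : d ∈ T := hTclosed.csSup_mem hTne hTbdd
      have hd0 : 0 ≤ d := hdT.1.1
      have hdx1 : d ≤ x1 := hdT.1.2
      have hd' : 0 ≤ deriv w d := hdT.2
      have hdlt : d < x1 := by
        rcases hdx1.lt_or_eq with h | h
        · exact h
        · exfalso; rw [h] at hd'; linarith
      have hneg : ∀ x ∈ Ioc d x1, deriv w x < 0 := by
        intro x hx
        by_contra hcc
        push_neg at hcc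
        have hmem : x ∈ T := ⟨⟨by linarith [hx.1.le], hx.2⟩, by simpa using hcc⟩
        have := le_csSup hTbdd hmem
        rw [← hddef] at this
        linarith [hx.1]
      have hd'0 : deriv w d = 0 := by
        rcases hd'.lt_or_eq with h | h
        · exfalso
          have hop : IsOpen (deriv w ⁻¹' Ioi 0) := isOpen_Ioi.preimage hcw'
          obtain ⟨δ, hδ, hball⟩ := Metric.isOpen_iff.mp hop d h
          set x := min (d + δ/2) x1 with hxdef
          have hxd : d < x := lt_min (by linarith) hdlt
          have hxx1 : x ≤ x1 := min_le_right _ _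
          have hxball : x ∈ Metric.ball d δ := by
            rw [Metric.mem_ball, Real.dist_eq, abs_sub_lt_iff]
            have := min_le_left (d + δ/2) x1
            constructor <;> [simp only [hxdef]; skip] <;> [linarith; linarith [hxd]]
          have h1 : 0 < deriv w x := hball hxball
          have h2 := hneg x ⟨hxd, hxx1⟩
          linarith
        · exact h.symm
      rcases hd0.lt_or_eq with hd0' | hd0'
      · -- d > 0 : contradiction via second derivative
        have hdI : d ∈ Ioo (0:ℝ) b := ⟨hd0', by linarith [hx1.2]⟩
        have h'' := hzero d hdI hd'0
        obtain ⟨δ, hδ, hmono⟩ := aux_mono_near hdw' hcw'' h''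
        set ε := min δ (x1 - d) / 2 with hεdef
        have hε0 : 0 < ε := by
          have : 0 < min δ (x1 - d) := lt_min hδ (by linarith)
          positivity
        have hεδ : ε ≤ δ / 2 := by
          have := min_le_left δ (x1 - d); simp only [hεdef]; linarith
        have hεx : ε ≤ (x1 - d) / 2 := by
          have := min_le_right δ (x1 - d); simp only [hεdef]; linarith
        have h1 : deriv w d < deriv w (d + ε) := by
          apply hmono ⟨by linarith, by linarith⟩ ⟨by linarith, by linarith⟩ (by linarith)
        rw [hd'0] at h1
        have h2 := hneg (d + ε) ⟨by linarith, by linarith⟩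
        linarith
      · -- d = 0 : w strictly decreasing on [0, x1], contradiction with w ≥ 0
        have hneg' : ∀ x ∈ Ioo (0:ℝ) x1, deriv w x < 0 := by
          intro x hx
          exact hneg x ⟨by rw [← hd0']; exact hx.1, hx.2.le⟩
        have hwanti : StrictAntiOn w (Icc 0 x1) := by
          apply strictAntiOn_of_deriv_neg (convex_Icc _ _) hw.continuous.continuousOn
          intro x hx
          rw [interior_Icc] at hx
          exact hneg' x hx
        have h1 : w x1 < w 0 := hwanti (left_mem_Icc.mpr hx1.1.le)
          (right_mem_Icc.mpr hx1.1.le) hx1.1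
        rw [hw0] at h1
        exact absurd (hwnn x1 ⟨hx1.1.le, hx1.2.le⟩) (by linarith)
  refine ⟨hstep, ?_⟩
  apply strictMonoOn_of_deriv_pos (convex_Icc _ _) hw.continuous.continuousOn
  intro x hx
  rw [interior_Icc] at hx
  exact hstep x hx
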